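/- Let (X, μ) be a measure space and let f, g : X → [0,∞) be integrable functions with ∫_X f dμ = ∫_X g dμ. Then (∫_X |f − g| dμ)² ≤ (∫_X f dμ) · ∫_X (f − g)(log f − log g) dμ, where the integrand (f − g)(log f − log g) is nonnegative (interpreted as +∞ where exactly one of f, g vanishes, and 0 where f = g), and the inequality holds in [0,∞]. -/

import Mathlib

open MeasureTheory
open scoped ENNReal Classical

lemma ck_log_key {t : ℝ} (ht : 1 ≤ t) : 2 * (t - 1) ≤ (t + 1) * Real.log t := by
  set F : ℝ → ℝ := fun s => (s + 1) * Real.log s - 2 * (s - 1) with hF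
  have hderiv : ∀ s : ℝ, 0 < s → HasDerivAt F (Real.log s + (s + 1) * s⁻¹ - 2) s := by
    intro s hs
    have h1 : HasDerivAt (fun s : ℝ => (s + 1) * Real.log s)
        (1 * Real.log s + (s + 1) * s⁻¹) s :=
      (((hasDerivAt_id s).add_const 1).mul (Real.hasDerivAt_log hs.ne'))
    have h2 : HasDerivAt (fun s : ℝ => 2 * (s - 1)) 2 s := by
      simpa using ((hasDerivAt_id s).sub_const 1).const_mul 2
    have h3 := h1.sub h2
    rw [one_mul] at h3
    exact h3
  have hmono : MonotoneOn F (Set.Ici (1 : ℝ)) := by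
    apply monotoneOn_of_deriv_nonneg (convex_Ici 1)
    · apply ContinuousOn.sub
      · exact (continuousOn_id.add continuousOn_const).mul
          (Real.continuousOn_log.mono (by intro x hx; simp at hx ⊢; linarith))
      · exact (continuousOn_const.mul (continuousOn_id.sub continuousOn_const))
    · intro x hx
      rw [interior_Ici] at hx
      exact (hderiv x (by linarith [hx.out])).differentiableAt.differentiableWithinAt
    · intro x hx
      rw [interior_Ici] at hx
      have hx1 : (1 : ℝ) < x := hx
      have hx0 : 0 < x := by linarith
      rw [(hderiv x hx0).deriv]
      have := Real.one_sub_inv_le_log_of_pos hx0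
      have hxi : (x + 1) * x⁻¹ = 1 + x⁻¹ := by field_simp
      rw [hxi]
      linarith
  have h1 : F 1 ≤ F t := hmono (by simp) ht ht
  have hF1 : F 1 = 0 := by simp [hF]
  rw [hF1] at h1
  simp only [hF] at h1
  linarith

lemma ck_pt_le {a b : ℝ} (hb : 0 < b) (hba : b ≤ a) :
    2 * (a - b) ^ 2 / (a + b) ≤ (a - b) * (Real.log a - Real.log b) := by
  have ha : 0 < a := lt_of_lt_of_le hb hba
  have ht : 1 ≤ a / b := (one_le_div hb).2 hba
  have key := ck_log_key ht
  have hlog : Real.log (a / b) = Real.log a - Real.log b := Real.log_div ha.ne' hb.ne'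
  rw [hlog] at key
  set L := Real.log a - Real.log b with hL
  have hL0 : 0 ≤ L := by
    rw [hL, sub_nonneg]
    exact Real.log_le_log hb hba
  -- key : 2 * (a/b - 1) ≤ (a/b + 1) * L
  have key' : 2 * (a - b) * b ≤ (a + b) * b * L := by
    have := mul_le_mul_of_nonneg_left key (le_of_lt (mul_pos hb hb) : (0:ℝ) ≤ b * b)
    have e1 : b * b * (2 * (a / b - 1)) = 2 * (a - b) * b := by field_simp
    have e2 : b * b * ((a / b + 1) * L) = (a + b) * b * L := by field_simp
    rw [e1, e2] at this
    exact this
  rw [div_le_iff₀ (by linarith : (0:ℝ) < a + b)]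
  have hab : 0 ≤ a - b := by linarith
  nlinarith [mul_le_mul_of_nonneg_left key' hab, mul_nonneg (mul_nonneg hab hab) hL0]

lemma ck_pt {a b : ℝ} (ha : 0 < a) (hb : 0 < b) :
    2 * (a - b) ^ 2 / (a + b) ≤ (a - b) * (Real.log a - Real.log b) := by
  rcases le_total b a with h | h
  · exact ck_pt_le hb h
  · have := ck_pt_le ha h
    have e1 : (b - a) ^ 2 = (a - b) ^ 2 := by ring
    have e2 : b + a = a + b := by ring
    have e3 : (b - a) * (Real.log b - Real.log a) = (a - b) * (Real.log a - Real.log b) := by ring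
    rw [e1, e2, e3] at this
    exact this

/-- Csiszár–Kullback variant: for nonnegative integrable `f, g` on a measure
space with equal integrals, `(∫ |f − g|)² ≤ (∫ f) · ∫ (f − g)(log f − log g)`, where the
integrand on the right is `[0,∞]`-valued: `+∞` where exactly one of `f, g` vanishes, and
given by the formula elsewhere (in particular `0` where `f = g`). -/
theorem csiszar_kullback_variant {X : Type*} [MeasurableSpace X] (μ : Measure X)
    (f g : X → ℝ) (hf0 : ∀ x, 0 ≤ f x) (hg0 : ∀ x, 0 ≤ g x)
    (hf : Integrable f μ) (hg : Integrable g μ)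
    (heq : ∫ x, f x ∂μ = ∫ x, g x ∂μ) :
    ENNReal.ofReal ((∫ x, |f x - g x| ∂μ) ^ 2) ≤
      ENNReal.ofReal (∫ x, f x ∂μ) *
        ∫⁻ x, (if (f x = 0 ∧ g x ≠ 0) ∨ (f x ≠ 0 ∧ g x = 0) then (⊤ : ℝ≥0∞)
          else ENNReal.ofReal ((f x - g x) * (Real.log (f x) - Real.log (g x)))) ∂μ := by
  set φ : X → ℝ := fun x => 2 * (f x - g x) ^ 2 / (f x + g x) with hφ
  set F : X → ℝ≥0∞ := fun x => ENNReal.ofReal (φ x) with hFdef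
  set G : X → ℝ≥0∞ := fun x => ENNReal.ofReal ((f x + g x) / 2) with hGdef
  have hfm : AEMeasurable f μ := hf.1.aemeasurable
  have hgm : AEMeasurable g μ := hg.1.aemeasurable
  have hφm : AEMeasurable φ μ :=
    (((hfm.sub hgm).pow_const 2).const_mul 2).div (hfm.add hgm)
  have hFm : AEMeasurable F μ := ENNReal.measurable_ofReal.comp_aemeasurable hφm
  have hGm : AEMeasurable G μ :=
    ENNReal.measurable_ofReal.comp_aemeasurable ((hfm.add hgm).div_const 2)
  -- pointwise factorization
  have hpt : ∀ x, ENNReal.ofReal (|f x - g x|) =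
      F x ^ (1/2 : ℝ) * G x ^ (1/2 : ℝ) := by
    intro x
    have hf0x := hf0 x; have hg0x := hg0 x
    rcases eq_or_lt_of_le (by linarith : (0:ℝ) ≤ f x + g x) with hs | hs
    · have hfx : f x = 0 := by linarith
      have hgx : g x = 0 := by linarith
      simp [hFdef, hGdef, hφ, hfx, hgx, ENNReal.rpow_eq_zero_iff]
    · have hφ0 : 0 ≤ φ x := by
        apply div_nonneg _ hs.le
        positivity
      rw [hFdef, hGdef, ENNReal.ofReal_rpow_of_nonneg hφ0 (by norm_num),
        ENNReal.ofReal_rpow_of_nonneg (by linarith) (by norm_num),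
        ← ENNReal.ofReal_mul (by positivity)]
      congr 1
      rw [← Real.mul_rpow hφ0 (by linarith)]
      have : φ x * ((f x + g x) / 2) = (f x - g x) ^ 2 := by
        rw [hφ]; field_simp
      rw [this, ← Real.sqrt_eq_rpow, Real.sqrt_sq_eq_abs]
  -- Cauchy-Schwarz
  have hCS : ∫⁻ x, ENNReal.ofReal (|f x - g x|) ∂μ ≤
      (∫⁻ x, F x ∂μ) ^ (1/2 : ℝ) * (∫⁻ x, G x ∂μ) ^ (1/2 : ℝ) := by
    calc ∫⁻ x, ENNReal.ofReal (|f x - g x|) ∂μ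
        = ∫⁻ x, F x ^ (1/2 : ℝ) * G x ^ (1/2 : ℝ) ∂μ := by
          exact lintegral_congr hpt
      _ ≤ _ := ENNReal.lintegral_mul_norm_pow_le hFm hGm (by norm_num) (by norm_num)
          (by norm_num)
  -- integral of G
  have hGint : ∫⁻ x, G x ∂μ = ENNReal.ofReal (∫ x, f x ∂μ) := by
    have h := ofReal_integral_eq_lintegral_ofReal ((hf.add hg).div_const 2)
      (Filter.Eventually.of_forall fun x => by
        have := hf0 x; have := hg0 x; simp only [Pi.add_apply]; positivity)
    simp only [Pi.add_apply] at h
    rw [hGdef, ← h]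
    congr 1
    rw [integral_div, integral_add hf hg, heq]
    ring
  -- F below the target integrand
  have hFle : ∫⁻ x, F x ∂μ ≤
      ∫⁻ x, (if (f x = 0 ∧ g x ≠ 0) ∨ (f x ≠ 0 ∧ g x = 0) then (⊤ : ℝ≥0∞)
        else ENNReal.ofReal ((f x - g x) * (Real.log (f x) - Real.log (g x)))) ∂μ := by
    apply lintegral_mono
    intro x
    dsimp only
    by_cases hcond : (f x = 0 ∧ g x ≠ 0) ∨ (f x ≠ 0 ∧ g x = 0)
    · simp [hcond]
    · rw [if_neg hcond]
      push_neg at hcond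
      rcases eq_or_lt_of_le (hf0 x) with hfx | hfx
      · have hgx : g x = 0 := by
          by_contra h; exact h (hcond.1 hfx.symm)
        simp [hFdef, hφ, ← hfx, hgx]
      · have hgx : 0 < g x := by
          rcases eq_or_lt_of_le (hg0 x) with h | h
          · exact absurd h.symm (hcond.2 hfx.ne')
          · exact h
        exact ENNReal.ofReal_le_ofReal (ck_pt hfx hgx)
  -- assemble
  have habs : ∫⁻ x, ENNReal.ofReal (|f x - g x|) ∂μ =
      ENNReal.ofReal (∫ x, |f x - g x| ∂μ) := by
    have h := ofReal_integral_eq_lintegral_ofReal (hf.sub hg).abs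
      (Filter.Eventually.of_forall fun x => abs_nonneg _)
    simp only [Pi.sub_apply, Pi.abs_apply] at h
    rw [← h]
  have hsq : ENNReal.ofReal ((∫ x, |f x - g x| ∂μ) ^ 2) =
      (∫⁻ x, ENNReal.ofReal (|f x - g x|) ∂μ) ^ 2 := by
    rw [habs, ← ENNReal.ofReal_pow (integral_nonneg fun x => abs_nonneg _)]
  rw [hsq]
  calc (∫⁻ x, ENNReal.ofReal (|f x - g x|) ∂μ) ^ 2
      ≤ ((∫⁻ x, F x ∂μ) ^ (1/2 : ℝ) * (∫⁻ x, G x ∂μ) ^ (1/2 : ℝ)) ^ 2 :=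
        pow_le_pow_left' hCS 2
    _ = (∫⁻ x, F x ∂μ) * (∫⁻ x, G x ∂μ) := by
        rw [mul_pow, ← ENNReal.rpow_natCast ((∫⁻ x, F x ∂μ) ^ (1/2:ℝ)) 2,
          ← ENNReal.rpow_natCast ((∫⁻ x, G x ∂μ) ^ (1/2:ℝ)) 2,
          ← ENNReal.rpow_mul, ← ENNReal.rpow_mul]
        norm_num
    _ = (∫⁻ x, G x ∂μ) * (∫⁻ x, F x ∂μ) := mul_comm _ _
    _ ≤ _ := by
        rw [hGint]
        exact mul_le_mul_right hFle _
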